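/- (Optimal coherent strategy for block computation of Boolean threshold functions.) Let H denote the binary entropy function H(p) = −p·log₂ p − (1−p)·log₂(1−p) (with H(0)=H(1)=0). Let 0 ≤ p_1 ≤ p_2 ≤ … ≤ p_n ≤ 1 and 1 ≤ θ ≤ n. Then the index i = n−θ+1 attains the minimum in the recursion with cost f = H: for every j ∈ {1,…,n}, H(p_{n−θ+1}) + p_{n−θ+1}·C_H(θ−1; p_{−(n−θ+1)}) + (1−p_{n−θ+1})·C_H(θ; p_{−(n−θ+1)}) ≤ H(p_j) + p_j·C_H(θ−1; p_{−j}) + (1−p_j)·C_H(θ; p_{−j}). In other words, among coherent strategies for block computation of Π_{n−k}(X_1,…,X_n), it is optimal for node k+1 to transmit its entire block first. -/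

import Mathlib

/-- The optimal expected cost `C_f(θ; p)` of sequentially computing the Boolean
threshold function `Π_θ` on independent Bernoulli variables with parameters given by
the list `p`, where querying a node with parameter `q` costs `f q`.
`cost f θ p = 0` if `θ = 0` or `θ > p.length`, and otherwise it is the minimum over
nodes `i` of `f p_i + p_i • cost f (θ-1) p_{-i} + (1 - p_i) • cost f θ p_{-i}`. -/
noncomputable def cost (f : ℝ → ℝ) : ℕ → List ℝ → ℝ
  | 0, _ => 0
  | (θ+1), p =>
      if p.length < θ + 1 then 0
      else ⨅ i : Fin p.length,
        (f (p.get i) + p.get i * cost f θ (p.eraseIdx i.1)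
          + (1 - p.get i) * cost f (θ+1) (p.eraseIdx i.1))
termination_by θ p => p.length
decreasing_by
  all_goals (have h := i.isLt; simp [List.length_eraseIdx, h]; omega)

/-- The binary entropy function `H(p) = -p log₂ p - (1-p) log₂ (1-p)`
(with the conventions `H(0) = H(1) = 0`, automatic since `Real.logb 2 0 = 0`). -/
noncomputable def binH (x : ℝ) : ℝ := -(x * Real.logb 2 x) - (1 - x) * Real.logb 2 (1 - x)

lemma binH_eq (x : ℝ) : binH x = Real.binEntropy x / Real.log 2 := by
  unfold binH Real.binEntropy Real.logb
  rw [Real.log_inv, Real.log_inv]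
  ring

lemma binH_zero : binH 0 = 0 := by simp [binH_eq]
lemma binH_one : binH 1 = 0 := by simp [binH_eq]

lemma binH_concave : ConcaveOn ℝ (Set.Icc 0 1) binH := by
  have h := Real.strictConcave_binEntropy.concaveOn
  have h2 : ConcaveOn ℝ (Set.Icc 0 1) (fun x => (Real.log 2)⁻¹ • Real.binEntropy x) :=
    h.smul (by positivity)
  convert h2 using 2 with x
  rw [binH_eq]; simp [div_eq_inv_mul]

lemma binH_nonneg {x : ℝ} (h0 : 0 ≤ x) (h1 : x ≤ 1) : 0 ≤ binH x := by
  rw [binH_eq]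
  have := Real.binEntropy_nonneg h0 h1
  positivity

/-- ratio lemma 1: `H(x)/x` antitone, in cross-multiplied form. -/
lemma binH_ratio1 {a b : ℝ} (ha : 0 ≤ a) (hab : a ≤ b) (hb : b ≤ 1) :
    a * binH b ≤ b * binH a := by
  rcases eq_or_lt_of_le (ha.trans hab) with hb0 | hb0
  · have : a = 0 := le_antisymm (hab.trans hb0.symm.le) ha
    simp [this, ← hb0, binH_zero]
  · have hmem0 : (0:ℝ) ∈ Set.Icc (0:ℝ) 1 := by constructor <;> norm_num
    have hmemb : b ∈ Set.Icc (0:ℝ) 1 := ⟨le_of_lt hb0, hb⟩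
    have ht1 : 0 ≤ 1 - a / b := by
      rw [sub_nonneg]; exact div_le_one_of_le₀ hab (le_of_lt hb0)
    have ht2 : 0 ≤ a / b := div_nonneg ha (le_of_lt hb0)
    have hsum : (1 - a / b) + a / b = 1 := by ring
    have := binH_concave.2 hmem0 hmemb ht1 ht2 hsum
    simp only [smul_eq_mul, mul_zero, zero_add, binH_zero, mul_zero] at this
    have h2 : a / b * binH b ≤ binH (a / b * b) := by linarith
    rw [div_mul_cancel₀ _ (ne_of_gt hb0)] at h2
    calc a * binH b = b * (a / b * binH b) := by field_simp
    _ ≤ b * binH a := by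
        apply mul_le_mul_of_nonneg_left h2 (le_of_lt hb0)

/-- ratio lemma 2: `H(x)/(1-x)` monotone, cross-multiplied. -/
lemma binH_ratio2 {a b : ℝ} (ha : 0 ≤ a) (hab : a ≤ b) (hb : b ≤ 1) :
    (1 - b) * binH a ≤ (1 - a) * binH b := by
  rcases eq_or_lt_of_le (hab.trans hb) with ha1 | ha1
  · have : b = 1 := le_antisymm hb (ha1.symm.le.trans hab)
    simp [this, ha1, binH_one]
  · have hmem1 : (1:ℝ) ∈ Set.Icc (0:ℝ) 1 := by constructor <;> norm_num
    have hmema : a ∈ Set.Icc (0:ℝ) 1 := ⟨ha, hab.trans hb⟩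
    have h1a : 0 < 1 - a := by linarith
    have ht1 : 0 ≤ (1 - b) / (1 - a) := by
      apply div_nonneg _ (le_of_lt h1a); linarith
    have ht2 : 0 ≤ (b - a) / (1 - a) := by
      apply div_nonneg _ (le_of_lt h1a); linarith
    have hsum : (1 - b) / (1 - a) + (b - a) / (1 - a) = 1 := by field_simp; ring
    have := binH_concave.2 hmema hmem1 ht1 ht2 hsum
    simp only [smul_eq_mul, mul_one, binH_one, mul_zero, add_zero] at this
    have harg : (1 - b) / (1 - a) * a + (b - a) / (1 - a) = b := by field_simp; ring
    rw [harg] at this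
    calc (1 - b) * binH a = (1 - a) * ((1 - b) / (1 - a) * binH a) := by field_simp
    _ ≤ (1 - a) * binH b := mul_le_mul_of_nonneg_left this (le_of_lt h1a)


noncomputable def gd (p : List ℝ) (i : ℕ) : ℝ := p.getD i 0

lemma gd_eq {p : List ℝ} {i : ℕ} (h : i < p.length) : gd p i = p[i] :=
  List.getD_eq_getElem p 0 h

lemma len_erase {p : List ℝ} {j : ℕ} (h : j < p.length) :
    (p.eraseIdx j).length = p.length - 1 := List.length_eraseIdx_of_lt h

lemma eraseIdx_drop_of_le {p : List ℝ} {j k : ℕ} (h : k ≤ j) (hj : j < p.length) :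
    (p.eraseIdx j).drop k = (p.drop k).eraseIdx (j - k) := by
  have hjk : j - k < (p.drop k).length := by simp only [List.length_drop]; omega
  apply List.ext_getElem
  · simp only [List.length_drop, len_erase hj, List.length_eraseIdx_of_lt hjk]; omega
  · intro n h1 h2
    have hl1 : n < (p.eraseIdx j).length - k := by simpa using h1
    have hlen : (p.eraseIdx j).length = p.length - 1 := len_erase hj
    rw [List.getElem_drop]
    rcases Nat.lt_or_ge n (j - k) with hn | hn
    · have e1 : k + n < (p.eraseIdx j).length := by omega
      have e2 : n < (List.drop k p).length := by omega
      rw [List.getElem_eraseIdx_of_lt (l := p) (i := j) (j := k+n) (by omega) (by omega),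
        List.getElem_eraseIdx_of_lt (l := p.drop k) (i := j-k) (j := n) (by omega) hn,
        List.getElem_drop]
    · rw [List.getElem_eraseIdx_of_ge (l := p) (i := j) (j := k+n) (by omega) (by omega),
        List.getElem_eraseIdx_of_ge (l := p.drop k) (i := j-k) (j := n) (by omega) hn,
        List.getElem_drop]
      congr 1 <;> omega

lemma eraseIdx_drop_of_gt {p : List ℝ} {j k : ℕ} (h : j < k) (hj : j < p.length) :
    (p.eraseIdx j).drop k = p.drop (k + 1) := by
  apply List.ext_getElem
  · simp only [List.length_drop, len_erase hj]; omega
  · intro n h1 h2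
    have h1' : k + n < (p.eraseIdx j).length := by simp only [List.length_drop] at h1; omega
    rw [List.getElem_drop, List.getElem_drop,
      List.getElem_eraseIdx_of_ge (l := p) (i := j) (j := k+n) (by omega) (by omega)]
    congr 1 <;> omega

lemma eraseIdx_take_of_le {p : List ℝ} {j k : ℕ} (h : j ≤ k) (hk : k < p.length) :
    (p.eraseIdx j).take k = (p.take (k + 1)).eraseIdx j := by
  have hjt : j < (p.take (k+1)).length := by simp only [List.length_take]; omega
  apply List.ext_getElem
  · simp only [List.length_take, len_erase (by omega : j < p.length),
      List.length_eraseIdx_of_lt hjt]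
    omega
  · intro n h1 h2
    have h1' : n < k := by
      simp only [List.length_take, len_erase (by omega : j < p.length)] at h1; omega
    have hne : n < (p.eraseIdx j).length := by rw [len_erase (by omega)]; omega
    rw [List.getElem_take]
    rcases Nat.lt_or_ge n j with hn | hn
    · rw [List.getElem_eraseIdx_of_lt (l := p) (i := j) (j := n) hne hn,
        List.getElem_eraseIdx_of_lt (l := p.take (k+1)) (i := j) (j := n) (by rw [List.length_eraseIdx_of_lt hjt]; simp only [List.length_take] at h2 ⊢; omega) hn,
        List.getElem_take]
    · rw [List.getElem_eraseIdx_of_ge (l := p) (i := j) (j := n) hne hn,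
        List.getElem_eraseIdx_of_ge (l := p.take (k+1)) (i := j) (j := n) (by rw [List.length_eraseIdx_of_lt hjt]; simp only [List.length_take] at h2 ⊢; omega) hn,
        List.getElem_take]

lemma eraseIdx_take_of_gt {p : List ℝ} {j k : ℕ} (h : k ≤ j) :
    (p.eraseIdx j).take k = p.take k := by
  rcases Nat.lt_or_ge j p.length with hj | hj
  · apply List.ext_getElem
    · simp only [List.length_take, len_erase hj]; omega
    · intro n h1 h2
      have h2' : n < k := by simp only [List.length_take] at h1; omega
      have hne : n < (p.eraseIdx j).length := by
        simp only [List.length_take] at h1; omega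
      rw [List.getElem_take, List.getElem_take,
        List.getElem_eraseIdx_of_lt (l := p) (i := j) (j := n) hne (by omega)]
  · rw [List.eraseIdx_of_length_le hj]

lemma gd_eraseIdx_of_lt {p : List ℝ} {j i : ℕ} (h : i < j) (hj : j < p.length) :
    gd (p.eraseIdx j) i = gd p i := by
  rw [gd_eq (by rw [len_erase hj]; omega), gd_eq (by omega : i < p.length),
    List.getElem_eraseIdx_of_lt (l := p) (i := j) (j := i) _ h]

lemma gd_eraseIdx_of_ge {p : List ℝ} {j i : ℕ} (h : j ≤ i) (hj : i + 1 < p.length) :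
    gd (p.eraseIdx j) i = gd p (i + 1) := by
  rw [gd_eq (by rw [len_erase (by omega : j < p.length)]; omega), gd_eq hj,
    List.getElem_eraseIdx_of_ge (l := p) (i := j) (j := i) _ h]

lemma gd_drop {p : List ℝ} {k i : ℕ} (h : k + i < p.length) :
    gd (p.drop k) i = gd p (k + i) := by
  rw [gd_eq (by simp only [List.length_drop]; omega), gd_eq h, List.getElem_drop]

lemma gd_take {p : List ℝ} {k i : ℕ} (h : i < k) (h2 : i < p.length) :
    gd (p.take k) i = gd p i := by
  rw [gd_eq (by simp only [List.length_take]; omega), gd_eq h2, List.getElem_take]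

lemma drop_cons {p : List ℝ} {k : ℕ} (h : k < p.length) :
    p.drop k = gd p k :: p.drop (k + 1) := by
  rw [gd_eq h]; exact List.drop_eq_getElem_cons h

lemma eraseIdx_drop_self {p : List ℝ} {j : ℕ} (hj : j < p.length) :
    (p.eraseIdx j).drop j = p.drop (j + 1) := by
  rw [eraseIdx_drop_of_le (le_refl j) hj, Nat.sub_self, List.eraseIdx_zero,
    ← List.drop_drop, List.drop_one]

lemma eraseIdx_take_eq_take {p : List ℝ} {j : ℕ} (hj : j < p.length) :
    (p.take (j+1)).eraseIdx j = p.take j := by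
  rw [← eraseIdx_take_of_le (le_refl j) hj, eraseIdx_take_of_gt (le_refl j)]

/-- probability that at least `k` of the independent Bernoulli variables are 1 -/
def probGE : ℕ → List ℝ → ℝ
  | 0, _ => 1
  | _+1, [] => 0
  | (k+1), (x :: q) => x * probGE k q + (1 - x) * probGE (k+1) q

/-- probability that at least `k` are 0 -/
def zeroGE : ℕ → List ℝ → ℝ
  | 0, _ => 1
  | _+1, [] => 0
  | (k+1), (x :: q) => (1 - x) * zeroGE k q + x * zeroGE (k+1) q

@[simp] lemma probGE_zero (q : List ℝ) : probGE 0 q = 1 := by cases q <;> rfl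
@[simp] lemma zeroGE_zero (q : List ℝ) : zeroGE 0 q = 1 := by cases q <;> rfl

lemma probGE_cons (k : ℕ) (x : ℝ) (q : List ℝ) :
    probGE k (x :: q) = x * probGE (k-1) q + (1 - x) * probGE k q := by
  cases k with
  | zero => simp only [Nat.zero_sub, probGE_zero]; ring
  | succ k => simp only [Nat.add_sub_cancel]; rfl

lemma zeroGE_cons (k : ℕ) (x : ℝ) (q : List ℝ) :
    zeroGE k (x :: q) = (1 - x) * zeroGE (k-1) q + x * zeroGE k q := by
  cases k with
  | zero => simp only [Nat.zero_sub, zeroGE_zero]; ring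
  | succ k => simp only [Nat.add_sub_cancel]; rfl

lemma probGE_of_length_lt : ∀ (q : List ℝ) (k : ℕ), q.length < k → probGE k q = 0
  | [], (k+1), _ => rfl
  | (x :: q), (k+1), h => by
    have h1 : q.length < k := by simp at h; omega
    have h2 : q.length < k + 1 := by omega
    show x * probGE k q + (1 - x) * probGE (k+1) q = 0
    rw [probGE_of_length_lt q k h1, probGE_of_length_lt q (k+1) h2]
    ring

lemma zeroGE_of_length_lt : ∀ (q : List ℝ) (k : ℕ), q.length < k → zeroGE k q = 0
  | [], (k+1), _ => rfl
  | (x :: q), (k+1), h => by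
    have h1 : q.length < k := by simp at h; omega
    have h2 : q.length < k + 1 := by omega
    show (1 - x) * zeroGE k q + x * zeroGE (k+1) q = 0
    rw [zeroGE_of_length_lt q k h1, zeroGE_of_length_lt q (k+1) h2]
    ring

lemma probGE_nonneg : ∀ (q : List ℝ) (k : ℕ), (∀ x ∈ q, 0 ≤ x ∧ x ≤ 1) → 0 ≤ probGE k q
  | _, 0, _ => by simp
  | [], (k+1), _ => le_refl 0
  | (x :: q), (k+1), h => by
    have hx := h x (by simp)
    have h' : ∀ y ∈ q, 0 ≤ y ∧ y ≤ 1 := fun y hy => h y (by simp [hy])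
    have i1 := probGE_nonneg q k h'
    have i2 := probGE_nonneg q (k+1) h'
    show 0 ≤ x * probGE k q + (1 - x) * probGE (k+1) q
    have h1 : 0 ≤ x * probGE k q := mul_nonneg hx.1 i1
    have h2 : 0 ≤ (1 - x) * probGE (k+1) q := mul_nonneg (by linarith [hx.2]) i2
    linarith

lemma zeroGE_nonneg : ∀ (q : List ℝ) (k : ℕ), (∀ x ∈ q, 0 ≤ x ∧ x ≤ 1) → 0 ≤ zeroGE k q
  | _, 0, _ => by simp
  | [], (k+1), _ => le_refl 0
  | (x :: q), (k+1), h => by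
    have hx := h x (by simp)
    have h' : ∀ y ∈ q, 0 ≤ y ∧ y ≤ 1 := fun y hy => h y (by simp [hy])
    have i1 := zeroGE_nonneg q k h'
    have i2 := zeroGE_nonneg q (k+1) h'
    show 0 ≤ (1 - x) * zeroGE k q + x * zeroGE (k+1) q
    have h1 : 0 ≤ (1-x) * zeroGE k q := mul_nonneg (by linarith [hx.2]) i1
    have h2 : 0 ≤ x * zeroGE (k+1) q := mul_nonneg hx.1 i2
    linarith

/-- conditioning identity for `probGE` -/
lemma probGE_condition : ∀ (q : List ℝ) (i : ℕ) (k : ℕ), i < q.length →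
    probGE k q = gd q i * probGE (k-1) (q.eraseIdx i) + (1 - gd q i) * probGE k (q.eraseIdx i)
  | [], i, k, h => by simp at h
  | (x :: q), 0, k, h => by
    simp only [List.eraseIdx_cons_zero]
    rw [probGE_cons]
    congr 2 <;> simp [gd]
  | (x :: q), (i+1), k, h => by
    have hi : i < q.length := by simp at h; omega
    have hg : gd (x :: q) (i+1) = gd q i := by simp [gd]
    simp only [List.eraseIdx_cons_succ, hg]
    cases k with
    | zero =>
      simp only [Nat.zero_sub, probGE_zero]; ring
    | succ k =>
      have e1 : probGE (k+1) (x :: q) = x * probGE k q + (1-x) * probGE (k+1) q := rfl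
      have e2 : probGE (k+1) (x :: q.eraseIdx i)
          = x * probGE k (q.eraseIdx i) + (1-x) * probGE (k+1) (q.eraseIdx i) := rfl
      rw [e1, e2, Nat.add_sub_cancel, probGE_cons,
        probGE_condition q i k hi, probGE_condition q i (k+1) hi, Nat.add_sub_cancel]
      ring

lemma zeroGE_condition : ∀ (q : List ℝ) (i : ℕ) (k : ℕ), i < q.length →
    zeroGE k q = (1 - gd q i) * zeroGE (k-1) (q.eraseIdx i) + gd q i * zeroGE k (q.eraseIdx i)
  | [], i, k, h => by simp at h
  | (x :: q), 0, k, h => by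
    simp only [List.eraseIdx_cons_zero]
    rw [zeroGE_cons]
    congr 2 <;> simp [gd]
  | (x :: q), (i+1), k, h => by
    have hi : i < q.length := by simp at h; omega
    have hg : gd (x :: q) (i+1) = gd q i := by simp [gd]
    simp only [List.eraseIdx_cons_succ, hg]
    cases k with
    | zero =>
      simp only [Nat.zero_sub, zeroGE_zero]; ring
    | succ k =>
      have e1 : zeroGE (k+1) (x :: q) = (1-x) * zeroGE k q + x * zeroGE (k+1) q := rfl
      have e2 : zeroGE (k+1) (x :: q.eraseIdx i)
          = (1-x) * zeroGE k (q.eraseIdx i) + x * zeroGE (k+1) (q.eraseIdx i) := rfl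
      rw [e1, e2, Nat.add_sub_cancel, zeroGE_cons,
        zeroGE_condition q i k hi, zeroGE_condition q i (k+1) hi, Nat.add_sub_cancel]
      ring

/-- the "pointer strategy" cost: always query index `length - θ` -/
noncomputable def ptr (f : ℝ → ℝ) : ℕ → List ℝ → ℝ
  | 0, _ => 0
  | (θ+1), p =>
      if p.length < θ + 1 then 0
      else f (gd p (p.length - (θ+1)))
        + gd p (p.length - (θ+1)) * ptr f θ (p.eraseIdx (p.length - (θ+1)))
        + (1 - gd p (p.length - (θ+1))) * ptr f (θ+1) (p.eraseIdx (p.length - (θ+1)))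
termination_by θ p => p.length
decreasing_by
  all_goals (rename_i h; rw [List.length_eraseIdx]; split <;> omega)

def wcoef (θ : ℕ) (p : List ℝ) (i : ℕ) : ℝ :=
  if i < p.length - θ then 1 - probGE θ (p.drop (i+1))
  else 1 - zeroGE (p.length + 1 - θ) (p.take i)

lemma sum_range_split (n j : ℕ) (hj : j < n) (g : ℕ → ℝ) :
    ∑ i ∈ Finset.range n, g i
      = (∑ i ∈ Finset.range j, g i) + g j + ∑ i ∈ Finset.Ico (j+1) n, g i := by
  rw [Finset.range_eq_Ico, ← Finset.sum_Ico_consecutive _ (Nat.zero_le j) (le_of_lt hj),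
    ← Finset.sum_Ico_consecutive _ (by omega : j ≤ j+1) (by omega : j + 1 ≤ n),
    Finset.sum_Ico_succ_top (le_refl j), ← Finset.range_eq_Ico]
  simp [Finset.Ico_self]
  ring

lemma sum_reindex (n j : ℕ) (hj : j < n) (hn : 1 ≤ n) (g : ℕ → ℝ) :
    ∑ i ∈ Finset.range (n-1), g (if i < j then i else i + 1)
      = (∑ i ∈ Finset.range j, g i) + ∑ i ∈ Finset.Ico (j+1) n, g i := by
  have h1 : j ≤ n - 1 := by omega
  rw [Finset.range_eq_Ico, ← Finset.sum_Ico_consecutive _ (Nat.zero_le j) h1,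
    ← Finset.range_eq_Ico]
  congr 1
  · apply Finset.sum_congr rfl
    intro i hi
    rw [if_pos (Finset.mem_range.mp hi)]
  · rw [show n = (n-1) + 1 by omega, show j + 1 = j + 1 by rfl]
    rw [← Finset.sum_Ico_add' (fun i => g i) j (n-1) 1]
    apply Finset.sum_congr rfl
    intro i hi
    rw [if_neg (by simp at hi; omega)]

lemma ptr_zero (f : ℝ → ℝ) (p : List ℝ) : ptr f 0 p = 0 := by rw [ptr]

lemma ptr_of_lt (f : ℝ → ℝ) (θ : ℕ) (p : List ℝ) (h : p.length < θ + 1) :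
    ptr f (θ+1) p = 0 := by rw [ptr, if_pos h]

lemma ptr_succ (f : ℝ → ℝ) (θ : ℕ) (p : List ℝ) (h : ¬ p.length < θ + 1) :
    ptr f (θ+1) p = f (gd p (p.length - (θ+1)))
        + gd p (p.length - (θ+1)) * ptr f θ (p.eraseIdx (p.length - (θ+1)))
        + (1 - gd p (p.length - (θ+1))) * ptr f (θ+1) (p.eraseIdx (p.length - (θ+1))) := by
  rw [ptr, if_neg h]

theorem ptr_eq_sum (f : ℝ → ℝ) : ∀ (n : ℕ) (p : List ℝ), p.length = n → ∀ (θ : ℕ),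
    ptr f θ p = ∑ i ∈ Finset.range p.length, f (gd p i) * wcoef θ p i := by
  intro n
  induction n using Nat.strong_induction_on with
  | _ n IH =>
    intro p hn θ
    match θ with
    | 0 =>
      rw [ptr_zero, eq_comm, Finset.sum_eq_zero]
      intro i hi
      have hw : wcoef 0 p i = 0 := by
        unfold wcoef
        rw [if_pos (by simpa using Finset.mem_range.mp hi)]
        simp
      rw [hw, mul_zero]
    | (θ+1) =>
      by_cases hlen : p.length < θ + 1
      · rw [ptr_of_lt f θ p hlen, eq_comm, Finset.sum_eq_zero]
        intro i hi
        have hw : wcoef (θ+1) p i = 0 := by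
          unfold wcoef
          rw [if_neg (by omega), show p.length + 1 - (θ+1) = 0 by omega]
          simp
        rw [hw, mul_zero]
      · have hlen' : θ + 1 ≤ p.length := by omega
        set is := p.length - (θ+1) with his
        have hisn : is < p.length := by omega
        have hplen : (p.eraseIdx is).length = p.length - 1 := len_erase hisn
        set e := gd p is with he
        rw [ptr_succ f θ p hlen,
          IH (p.length - 1) (by omega) (p.eraseIdx is) hplen θ,
          IH (p.length - 1) (by omega) (p.eraseIdx is) hplen (θ+1),
          hplen, Finset.mul_sum, Finset.mul_sum, add_assoc, ← Finset.sum_add_distrib]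
        have hkey : ∀ i ∈ Finset.range (p.length - 1),
            e * (f (gd (p.eraseIdx is) i) * wcoef θ (p.eraseIdx is) i)
              + (1-e) * (f (gd (p.eraseIdx is) i) * wcoef (θ+1) (p.eraseIdx is) i)
            = f (gd p (if i < is then i else i+1)) * wcoef (θ+1) p (if i < is then i else i+1) := by
          intro i hi
          have hi' : i < p.length - 1 := Finset.mem_range.mp hi
          rcases Nat.lt_or_ge i is with hlt | hge
          · -- low region
            rw [if_pos hlt, gd_eraseIdx_of_lt hlt hisn]
            have hw1 : wcoef θ (p.eraseIdx is) i = 1 - probGE θ ((p.eraseIdx is).drop (i+1)) := by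
              unfold wcoef
              rw [if_pos (by rw [hplen]; omega)]
            have hw3 : wcoef (θ+1) p i = 1 - probGE (θ+1) (p.drop (i+1)) := by
              unfold wcoef
              rw [if_pos (by omega)]
            rcases Nat.lt_or_ge (i+1) is with hB | hB
            · -- case A : i+1 < is
              have hw2 : wcoef (θ+1) (p.eraseIdx is) i
                  = 1 - probGE (θ+1) ((p.eraseIdx is).drop (i+1)) := by
                unfold wcoef
                rw [if_pos (by rw [hplen]; omega)]
              have hd : (p.eraseIdx is).drop (i+1) = (p.drop (i+1)).eraseIdx (is - (i+1)) :=
                eraseIdx_drop_of_le (by omega) hisn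
              have hcond := probGE_condition (p.drop (i+1)) (is - (i+1)) (θ+1)
                (by simp only [List.length_drop]; omega)
              rw [gd_drop (by omega), show i + 1 + (is - (i+1)) = is by omega, ← he,
                Nat.add_sub_cancel] at hcond
              rw [hw1, hw2, hw3, hd, hcond]
              ring
            · -- case B : i+1 = is
              have hieq : i + 1 = is := by omega
              have hw2 : wcoef (θ+1) (p.eraseIdx is) i = 1 := by
                unfold wcoef
                rw [if_neg (by rw [hplen]; omega), hplen,
                  show p.length - 1 + 1 - (θ+1) = is by omega,
                  eraseIdx_take_of_gt (by omega : i ≤ is),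
                  zeroGE_of_length_lt _ _ (by rw [List.length_take]; omega)]
                ring
              have hdrop : (p.eraseIdx is).drop (i+1) = p.drop (is+1) := by
                rw [hieq]; exact eraseIdx_drop_self hisn
              have hD : probGE (θ+1) (p.drop (is+1)) = 0 :=
                probGE_of_length_lt _ _ (by rw [List.length_drop]; omega)
              have hsplit : probGE (θ+1) (p.drop (i+1))
                  = e * probGE θ (p.drop (is+1)) + (1-e) * probGE (θ+1) (p.drop (is+1)) := by
                rw [hieq, drop_cons hisn, ← he, probGE_cons, Nat.add_sub_cancel]
              rw [hw1, hw2, hw3, hdrop, hsplit, hD]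
              ring
          · -- case C : high region
            rw [if_neg (by omega), gd_eraseIdx_of_ge hge (by omega)]
            have hw1 : wcoef θ (p.eraseIdx is) i
                = 1 - zeroGE (p.length - θ) ((p.eraseIdx is).take i) := by
              unfold wcoef
              rw [if_neg (by rw [hplen]; omega), hplen,
                show p.length - 1 + 1 - θ = p.length - θ by omega]
            have hw2 : wcoef (θ+1) (p.eraseIdx is) i
                = 1 - zeroGE (p.length - θ - 1) ((p.eraseIdx is).take i) := by
              unfold wcoef
              rw [if_neg (by rw [hplen]; omega), hplen,
                show p.length - 1 + 1 - (θ+1) = p.length - θ - 1 by omega]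
            have hw3 : wcoef (θ+1) p (i+1)
                = 1 - zeroGE (p.length - θ) (p.take (i+1)) := by
              unfold wcoef
              rw [if_neg (by omega), show p.length + 1 - (θ+1) = p.length - θ by omega]
            have ht : (p.eraseIdx is).take i = (p.take (i+1)).eraseIdx is :=
              eraseIdx_take_of_le hge (by omega)
            have hcond := zeroGE_condition (p.take (i+1)) is (p.length - θ)
              (by rw [List.length_take]; omega)
            rw [gd_take (by omega) (by omega), ← he,
              show p.length - θ - 1 = p.length - θ - 1 by rfl] at hcond
            rw [hw1, hw2, hw3, ht, hcond]
            ring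
        rw [Finset.sum_congr rfl hkey,
          sum_reindex p.length is hisn (by omega) (fun i => f (gd p i) * wcoef (θ+1) p i),
          sum_range_split p.length is hisn (fun i => f (gd p i) * wcoef (θ+1) p i)]
        have hwis : wcoef (θ+1) p is = 1 := by
          unfold wcoef
          rw [if_neg (by omega), show p.length + 1 - (θ+1) = p.length - θ by omega,
            zeroGE_of_length_lt _ _ (by rw [List.length_take]; omega)]
          ring
        rw [hwis]
        ring

noncomputable def valIdx (f : ℝ → ℝ) (θ : ℕ) (p : List ℝ) (j : ℕ) : ℝ :=
  f (gd p j) + gd p j * ptr f (θ-1) (p.eraseIdx j) + (1 - gd p j) * ptr f θ (p.eraseIdx j)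

lemma valIdx_istar (f : ℝ → ℝ) (θ : ℕ) (p : List ℝ) (hθ : 1 ≤ θ) (hθn : θ ≤ p.length) :
    valIdx f θ p (p.length - θ) = ptr f θ p := by
  obtain ⟨θ', rfl⟩ : ∃ θ', θ = θ' + 1 := ⟨θ - 1, by omega⟩
  rw [valIdx, ptr_succ f θ' p (by omega), Nat.add_sub_cancel]

theorem delta_low (f : ℝ → ℝ) (p : List ℝ) (θ j : ℕ) (hθ : 1 ≤ θ) (hθn : θ ≤ p.length)
    (hj : j < p.length - θ) :
    valIdx f θ p j - ptr f θ p
      = probGE θ (p.drop (j+1)) * f (gd p j)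
        - gd p j * ∑ i ∈ Finset.Ico (j+1) (p.length - θ + 1),
            (probGE (θ-1) (p.drop (i+1)) - probGE θ (p.drop (i+1))) * f (gd p i) := by
  have hn : p.length = p.length := rfl
  set n := p.length with hnn
  set is := n - θ with his
  have hjn : j < n := by omega
  have hplen : (p.eraseIdx j).length = n - 1 := len_erase hjn
  set pj := gd p j with hpj
  set p' := p.eraseIdx j with hp'
  rw [valIdx,
      ptr_eq_sum f (n-1) p' hplen (θ-1),
      ptr_eq_sum f (n-1) p' hplen θ,
      ptr_eq_sum f n p rfl θ, hplen]
  rw [Finset.mul_sum, Finset.mul_sum, add_assoc, ← Finset.sum_add_distrib]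
  set cc : ℕ → ℝ := fun k =>
    pj * wcoef (θ-1) p' (if k < j then k else k - 1)
      + (1 - pj) * wcoef θ p' (if k < j then k else k - 1) with hcc
  have hpt : ∀ i ∈ Finset.range (n-1),
      pj * (f (gd p' i) * wcoef (θ-1) p' i)
        + (1-pj) * (f (gd p' i) * wcoef θ p' i)
      = (fun k => f (gd p k) * cc k) (if i < j then i else i + 1) := by
    intro i hi
    have hi' : i < n - 1 := Finset.mem_range.mp hi
    rcases Nat.lt_or_ge i j with h | h
    · have hlt2 : gd p' i = gd p i := gd_eraseIdx_of_lt (p := p) h hjn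
      simp only [hcc, if_pos h, hlt2, ← hpj]
      ring
    · have : ¬ (i + 1 < j) := by omega
      have hge : gd p' i = gd p (i+1) := gd_eraseIdx_of_ge (p := p) h (by omega)
      simp only [hcc, if_neg this, if_neg (by omega : ¬ i < j), Nat.add_sub_cancel, hge]
      ring
  rw [Finset.sum_congr rfl hpt,
    sum_reindex n j hjn (by omega) (fun k => f (gd p k) * cc k),
    sum_range_split n j hjn (fun i => f (gd p i) * wcoef θ p i)]
  have heq1 : ∀ k ∈ Finset.range j, f (gd p k) * cc k = f (gd p k) * wcoef θ p k := by
    intro k hk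
    have hk' : k < j := Finset.mem_range.mp hk
    have hd : p'.drop (k+1) = (p.drop (k+1)).eraseIdx (j - (k+1)) :=
      eraseIdx_drop_of_le (by omega) hjn
    have hcond := probGE_condition (p.drop (k+1)) (j - (k+1)) θ
      (by simp only [List.length_drop]; omega)
    rw [gd_drop (by omega), show k + 1 + (j - (k+1)) = j by omega, ← hpj] at hcond
    have hw1 : wcoef (θ-1) p' k = 1 - probGE (θ-1) (p'.drop (k+1)) := by
      unfold wcoef; rw [if_pos (by rw [hplen]; omega)]
    have hw2 : wcoef θ p' k = 1 - probGE θ (p'.drop (k+1)) := by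
      unfold wcoef; rw [if_pos (by rw [hplen]; omega)]
    have hw3 : wcoef θ p k = 1 - probGE θ (p.drop (k+1)) := by
      unfold wcoef; rw [if_pos (by omega)]
    simp only [hcc, if_pos hk', hw1, hw2, hw3, hd, hcond]
    ring
  rw [Finset.sum_congr rfl heq1]
  have heq2 : ∀ k ∈ Finset.Ico (j+1) n,
      f (gd p k) * cc k - f (gd p k) * wcoef θ p k
      = if k < is + 1
          then -(pj * ((probGE (θ-1) (p.drop (k+1)) - probGE θ (p.drop (k+1))) * f (gd p k)))
          else 0 := by
    intro k hk
    obtain ⟨hk1, hk2⟩ := Finset.mem_Ico.mp hk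
    have hccx : cc k = pj * wcoef (θ-1) p' (k-1) + (1 - pj) * wcoef θ p' (k-1) := by
      simp only [hcc, if_neg (by omega : ¬ k < j)]
    have hk1' : (k - 1) + 1 = k := by omega
    rcases Nat.lt_or_ge k is with hc | hc
    · -- k < is
      rw [if_pos (by omega)]
      have hw1 : wcoef (θ-1) p' (k-1) = 1 - probGE (θ-1) (p.drop (k+1)) := by
        unfold wcoef
        rw [if_pos (by rw [hplen]; omega), hk1', eraseIdx_drop_of_gt (by omega) hjn]
      have hw2 : wcoef θ p' (k-1) = 1 - probGE θ (p.drop (k+1)) := by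
        unfold wcoef
        rw [if_pos (by rw [hplen]; omega), hk1', eraseIdx_drop_of_gt (by omega) hjn]
      have hw3 : wcoef θ p k = 1 - probGE θ (p.drop (k+1)) := by
        unfold wcoef; rw [if_pos (by omega)]
      rw [hccx, hw1, hw2, hw3]
      ring
    rcases Nat.eq_or_lt_of_le hc with hc2 | hc2
    · -- k = is
      rw [if_pos (by omega)]
      have hw1 : wcoef (θ-1) p' (k-1) = 1 - probGE (θ-1) (p.drop (k+1)) := by
        unfold wcoef
        rw [if_pos (by rw [hplen]; omega), hk1', eraseIdx_drop_of_gt (by omega) hjn]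
      have hw2 : wcoef θ p' (k-1) = 1 := by
        unfold wcoef
        rw [if_neg (by rw [hplen]; omega), hplen,
          show n - 1 + 1 - θ = is by omega,
          eraseIdx_take_of_le (by omega) (by omega), hk1',
          zeroGE_of_length_lt _ _ (by rw [List.length_eraseIdx_of_lt (by rw [List.length_take]; omega), List.length_take]; omega)]
        ring
      have hw3 : wcoef θ p k = 1 := by
        unfold wcoef
        rw [if_neg (by omega),
          zeroGE_of_length_lt _ _ (by rw [List.length_take]; omega)]
        ring
      have hA : probGE θ (p.drop (k+1)) = 0 :=
        probGE_of_length_lt _ _ (by rw [List.length_drop]; omega)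
      rw [hccx, hw1, hw2, hw3, hA]
      ring
    · -- k > is
      rw [if_neg (by omega)]
      have hw1 : wcoef (θ-1) p' (k-1)
          = 1 - zeroGE (n + 1 - θ) ((p.take k).eraseIdx j) := by
        unfold wcoef
        rw [if_neg (by rw [hplen]; omega), hplen,
          show n - 1 + 1 - (θ-1) = n + 1 - θ by omega,
          eraseIdx_take_of_le (by omega) (by omega), hk1']
      have hw2 : wcoef θ p' (k-1)
          = 1 - zeroGE (n - θ) ((p.take k).eraseIdx j) := by
        unfold wcoef
        rw [if_neg (by rw [hplen]; omega), hplen,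
          show n - 1 + 1 - θ = n - θ by omega,
          eraseIdx_take_of_le (by omega) (by omega), hk1']
      have hw3 : wcoef θ p k = 1 - zeroGE (n + 1 - θ) (p.take k) := by
        unfold wcoef; rw [if_neg (by omega)]
      have hcond := zeroGE_condition (p.take k) j (n + 1 - θ)
        (by rw [List.length_take]; omega)
      rw [gd_take (by omega) (by omega), ← hpj,
        show n + 1 - θ - 1 = n - θ by omega] at hcond
      rw [hccx, hw1, hw2, hw3, hcond]
      ring
  have hw_j : wcoef θ p j = 1 - probGE θ (p.drop (j+1)) := by
    unfold wcoef; rw [if_pos (by omega)]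
  have hIco : ∑ k ∈ Finset.Ico (j+1) n, f (gd p k) * cc k
      - ∑ k ∈ Finset.Ico (j+1) n, f (gd p k) * wcoef θ p k
      = -(pj * ∑ i ∈ Finset.Ico (j+1) (is+1),
          (probGE (θ-1) (p.drop (i+1)) - probGE θ (p.drop (i+1))) * f (gd p i)) := by
    rw [← Finset.sum_sub_distrib]
    rw [show (Finset.Ico (j+1) n) = Finset.Ico (j+1) n from rfl]
    rw [← Finset.sum_subset (Finset.Ico_subset_Ico (le_refl (j+1)) (by omega : is + 1 ≤ n))
      (fun x hx hnx => by
        rw [heq2 x hx, if_neg]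
        intro hcon
        exact hnx (Finset.mem_Ico.mpr ⟨(Finset.mem_Ico.mp hx).1, hcon⟩))]
    rw [Finset.sum_congr rfl (fun x hx => by
      rw [heq2 x (Finset.mem_Ico.mpr ⟨(Finset.mem_Ico.mp hx).1, by
        have := (Finset.mem_Ico.mp hx).2; omega⟩), if_pos (Finset.mem_Ico.mp hx).2])]
    rw [Finset.sum_neg_distrib, Finset.mul_sum]
  have hIco' : ∑ k ∈ Finset.Ico (j+1) n, f (gd p k) * cc k
      = ∑ k ∈ Finset.Ico (j+1) n, f (gd p k) * wcoef θ p k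
        - pj * ∑ i ∈ Finset.Ico (j+1) (is+1),
          (probGE (θ-1) (p.drop (i+1)) - probGE θ (p.drop (i+1))) * f (gd p i) := by
    linarith [hIco]
  rw [hIco', hw_j]
  ring

theorem delta_high (f : ℝ → ℝ) (p : List ℝ) (θ j : ℕ) (hθ : 1 ≤ θ) (hθn : θ ≤ p.length)
    (hj1 : p.length - θ < j) (hj2 : j < p.length) :
    valIdx f θ p j - ptr f θ p
      = zeroGE (p.length + 1 - θ) (p.take j) * f (gd p j)
        - (1 - gd p j) * ∑ i ∈ Finset.Ico (p.length - θ) j,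
            (zeroGE (p.length - θ) (p.take i) - zeroGE (p.length + 1 - θ) (p.take i)) * f (gd p i) := by
  set n := p.length with hnn
  set is := n - θ with his
  have hjn : j < n := by omega
  have hplen : (p.eraseIdx j).length = n - 1 := len_erase hjn
  set pj := gd p j with hpj
  set p' := p.eraseIdx j with hp'
  rw [valIdx,
      ptr_eq_sum f (n-1) p' hplen (θ-1),
      ptr_eq_sum f (n-1) p' hplen θ,
      ptr_eq_sum f n p rfl θ, hplen]
  rw [Finset.mul_sum, Finset.mul_sum, add_assoc, ← Finset.sum_add_distrib]
  set cc : ℕ → ℝ := fun k =>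
    pj * wcoef (θ-1) p' (if k < j then k else k - 1)
      + (1 - pj) * wcoef θ p' (if k < j then k else k - 1) with hcc
  have hpt : ∀ i ∈ Finset.range (n-1),
      pj * (f (gd p' i) * wcoef (θ-1) p' i)
        + (1-pj) * (f (gd p' i) * wcoef θ p' i)
      = (fun k => f (gd p k) * cc k) (if i < j then i else i + 1) := by
    intro i hi
    have hi' : i < n - 1 := Finset.mem_range.mp hi
    rcases Nat.lt_or_ge i j with h | h
    · have hlt2 : gd p' i = gd p i := gd_eraseIdx_of_lt (p := p) h hjn
      simp only [hcc, if_pos h, hlt2, ← hpj]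
      ring
    · have hcd : ¬ (i + 1 < j) := by omega
      have hge : gd p' i = gd p (i+1) := gd_eraseIdx_of_ge (p := p) h (by omega)
      simp only [hcc, if_neg hcd, if_neg (by omega : ¬ i < j), Nat.add_sub_cancel, hge]
      ring
  rw [Finset.sum_congr rfl hpt,
    sum_reindex n j hjn (by omega) (fun k => f (gd p k) * cc k),
    sum_range_split n j hjn (fun i => f (gd p i) * wcoef θ p i)]
  -- the part above j is unchanged
  have heq2 : ∀ k ∈ Finset.Ico (j+1) n, f (gd p k) * cc k = f (gd p k) * wcoef θ p k := by
    intro k hk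
    obtain ⟨hk1, hk2⟩ := Finset.mem_Ico.mp hk
    have hk1' : (k - 1) + 1 = k := by omega
    have hccx : cc k = pj * wcoef (θ-1) p' (k-1) + (1 - pj) * wcoef θ p' (k-1) := by
      simp only [hcc, if_neg (by omega : ¬ k < j)]
    have hw1 : wcoef (θ-1) p' (k-1)
        = 1 - zeroGE (n + 1 - θ) ((p.take k).eraseIdx j) := by
      unfold wcoef
      rw [if_neg (by rw [hplen]; omega), hplen,
        show n - 1 + 1 - (θ-1) = n + 1 - θ by omega,
        eraseIdx_take_of_le (by omega) (by omega), hk1']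
    have hw2 : wcoef θ p' (k-1)
        = 1 - zeroGE (n - θ) ((p.take k).eraseIdx j) := by
      unfold wcoef
      rw [if_neg (by rw [hplen]; omega), hplen,
        show n - 1 + 1 - θ = n - θ by omega,
        eraseIdx_take_of_le (by omega) (by omega), hk1']
    have hw3 : wcoef θ p k = 1 - zeroGE (n + 1 - θ) (p.take k) := by
      unfold wcoef; rw [if_neg (by omega)]
    have hcond := zeroGE_condition (p.take k) j (n + 1 - θ)
      (by rw [List.length_take]; omega)
    rw [gd_take (by omega) (by omega), ← hpj,
      show n + 1 - θ - 1 = n - θ by omega] at hcond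
    rw [hccx, hw1, hw2, hw3, hcond]
    ring
  rw [Finset.sum_congr rfl heq2]
  -- the part below j
  have heq1 : ∀ k ∈ Finset.range j,
      f (gd p k) * cc k - f (gd p k) * wcoef θ p k
      = if is ≤ k
          then -((1 - pj) * ((zeroGE (n - θ) (p.take k) - zeroGE (n + 1 - θ) (p.take k)) * f (gd p k)))
          else 0 := by
    intro k hk
    have hk' : k < j := Finset.mem_range.mp hk
    have hccx : cc k = pj * wcoef (θ-1) p' k + (1 - pj) * wcoef θ p' k := by
      simp only [hcc, if_pos hk']
    rcases Nat.lt_or_ge k is with hc | hc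
    · -- k < is : vanishing region
      rw [if_neg (by omega)]
      have hw1 : wcoef (θ-1) p' k = 1 - probGE (θ-1) ((p.drop (k+1)).eraseIdx (j - (k+1))) := by
        unfold wcoef
        rw [if_pos (by rw [hplen]; omega), eraseIdx_drop_of_le (by omega) hjn]
      have hw3 : wcoef θ p k = 1 - probGE θ (p.drop (k+1)) := by
        unfold wcoef; rw [if_pos (by omega)]
      have hcond := probGE_condition (p.drop (k+1)) (j - (k+1)) θ
        (by simp only [List.length_drop]; omega)
      rw [gd_drop (by omega), show k + 1 + (j - (k+1)) = j by omega, ← hpj] at hcond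
      rcases Nat.lt_or_ge k (is - 1) with hc2 | hc2
      · -- k < is - 1 : both low
        have hw2 : wcoef θ p' k = 1 - probGE θ ((p.drop (k+1)).eraseIdx (j - (k+1))) := by
          unfold wcoef
          rw [if_pos (by rw [hplen]; omega), eraseIdx_drop_of_le (by omega) hjn]
        rw [hccx, hw1, hw2, hw3, hcond]
        ring
      · -- k = is - 1 (is ≥ 1)
        have hkeq : k = is - 1 := by omega
        have hw2 : wcoef θ p' k = 1 := by
          unfold wcoef
          rw [if_neg (by rw [hplen]; omega), hplen,
            show n - 1 + 1 - θ = is by omega,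
            eraseIdx_take_of_gt (by omega : k ≤ j),
            zeroGE_of_length_lt _ _ (by rw [List.length_take]; omega)]
          ring
        have hA : probGE θ ((p.drop (k+1)).eraseIdx (j - (k+1))) = 0 := by
          apply probGE_of_length_lt
          rw [List.length_eraseIdx_of_lt (by simp only [List.length_drop]; omega),
            List.length_drop]
          omega
        rw [hccx, hw1, hw2, hw3, hcond, hA]
        ring
    · -- is ≤ k < j : the Q region
      rw [if_pos hc]
      have hw1 : wcoef (θ-1) p' k = 1 - zeroGE (n + 1 - θ) (p.take k) := by
        unfold wcoef
        rw [if_neg (by rw [hplen]; omega), hplen,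
          show n - 1 + 1 - (θ-1) = n + 1 - θ by omega,
          eraseIdx_take_of_gt (by omega : k ≤ j)]
      have hw2 : wcoef θ p' k = 1 - zeroGE (n - θ) (p.take k) := by
        unfold wcoef
        rw [if_neg (by rw [hplen]; omega), hplen,
          show n - 1 + 1 - θ = n - θ by omega,
          eraseIdx_take_of_gt (by omega : k ≤ j)]
      have hw3 : wcoef θ p k = 1 - zeroGE (n + 1 - θ) (p.take k) := by
        unfold wcoef; rw [if_neg (by omega)]
      rw [hccx, hw1, hw2, hw3]
      ring
  have hw_j : wcoef θ p j = 1 - zeroGE (n + 1 - θ) (p.take j) := by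
    unfold wcoef; rw [if_neg (by omega)]
  have hIco : ∑ k ∈ Finset.range j, f (gd p k) * cc k
      - ∑ k ∈ Finset.range j, f (gd p k) * wcoef θ p k
      = -((1 - pj) * ∑ i ∈ Finset.Ico is j,
          (zeroGE (n - θ) (p.take i) - zeroGE (n + 1 - θ) (p.take i)) * f (gd p i)) := by
    rw [← Finset.sum_sub_distrib, Finset.range_eq_Ico,
      ← Finset.sum_subset (Finset.Ico_subset_Ico (Nat.zero_le is) (le_refl j))
      (fun x hx hnx => by
        rw [heq1 x (by rw [Finset.range_eq_Ico]; exact hx), if_neg]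
        intro hcon
        exact hnx (Finset.mem_Ico.mpr ⟨hcon, (Finset.mem_Ico.mp hx).2⟩))]
    rw [Finset.sum_congr rfl (fun x hx => by
      rw [heq1 x (Finset.mem_range.mpr (Finset.mem_Ico.mp hx).2),
        if_pos (Finset.mem_Ico.mp hx).1])]
    rw [Finset.sum_neg_distrib, Finset.mul_sum]
  have hIco' : ∑ k ∈ Finset.range j, f (gd p k) * cc k
      = ∑ k ∈ Finset.range j, f (gd p k) * wcoef θ p k
        - (1 - pj) * ∑ i ∈ Finset.Ico is j,
          (zeroGE (n - θ) (p.take i) - zeroGE (n + 1 - θ) (p.take i)) * f (gd p i) := by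
    linarith [hIco]
  rw [hIco', hw_j]
  ring

lemma gd_bounds {p : List ℝ} (hmem : ∀ x ∈ p, 0 ≤ x ∧ x ≤ 1) {i : ℕ} (hi : i < p.length) :
    0 ≤ gd p i ∧ gd p i ≤ 1 := by
  rw [gd_eq hi]
  exact hmem _ (List.getElem_mem hi)

lemma delta_low' (f : ℝ → ℝ) (p : List ℝ) (θ j : ℕ) (hθ : 1 ≤ θ) (hθn : θ ≤ p.length)
    (hj : j ≤ p.length - θ) :
    valIdx f θ p j - ptr f θ p
      = probGE θ (p.drop (j+1)) * f (gd p j)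
        - gd p j * ∑ i ∈ Finset.Ico (j+1) (p.length - θ + 1),
            (probGE (θ-1) (p.drop (i+1)) - probGE θ (p.drop (i+1))) * f (gd p i) := by
  rcases Nat.eq_or_lt_of_le hj with he | hlt
  · rw [he, valIdx_istar f θ p hθ hθn,
      probGE_of_length_lt _ _ (by rw [List.length_drop]; omega), Finset.Ico_self,
      Finset.sum_empty]
    ring
  · exact delta_low f p θ j hθ hθn hlt

lemma delta_high' (f : ℝ → ℝ) (p : List ℝ) (θ j : ℕ) (hθ : 1 ≤ θ) (hθn : θ ≤ p.length)
    (hj1 : p.length - θ ≤ j) (hj2 : j < p.length) :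
    valIdx f θ p j - ptr f θ p
      = zeroGE (p.length + 1 - θ) (p.take j) * f (gd p j)
        - (1 - gd p j) * ∑ i ∈ Finset.Ico (p.length - θ) j,
            (zeroGE (p.length - θ) (p.take i) - zeroGE (p.length + 1 - θ) (p.take i)) * f (gd p i) := by
  rcases Nat.eq_or_lt_of_le hj1 with he | hlt
  · rw [← he, valIdx_istar f θ p hθ hθn,
      zeroGE_of_length_lt _ _ (by rw [List.length_take]; omega), Finset.Ico_self,
      Finset.sum_empty]
    ring
  · exact delta_high f p θ j hθ hθn hlt hj2

theorem low_nonneg (f : ℝ → ℝ) (hf0 : f 0 = 0)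
    (hR1 : ∀ a b : ℝ, 0 ≤ a → a ≤ b → b ≤ 1 → a * f b ≤ b * f a)
    (p : List ℝ) (hmem : ∀ x ∈ p, 0 ≤ x ∧ x ≤ 1)
    (hsort : ∀ i k : ℕ, i ≤ k → k < p.length → gd p i ≤ gd p k)
    (θ : ℕ) (hθ1 : 1 ≤ θ) (hθn : θ ≤ p.length) :
    ∀ (d j : ℕ), j + d = p.length - θ → 0 ≤ valIdx f θ p j - ptr f θ p := by
  intro d
  induction d with
  | zero =>
    intro j hj
    have hje : j = p.length - θ := by omega
    rw [hje, valIdx_istar f θ p hθ1 hθn]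
    simp
  | succ d IH =>
    intro j hj
    have hjlt : j < p.length - θ := by omega
    have hj1n : j + 1 < p.length := by omega
    have hIH := IH (j+1) (by omega)
    rw [delta_low' f p θ (j+1) hθ1 hθn (by omega)] at hIH
    rw [delta_low' f p θ j hθ1 hθn (by omega)]
    have hpeel : ∑ i ∈ Finset.Ico (j+1) (p.length - θ + 1),
          (probGE (θ-1) (p.drop (i+1)) - probGE θ (p.drop (i+1))) * f (gd p i)
        = (probGE (θ-1) (p.drop (j+1+1)) - probGE θ (p.drop (j+1+1))) * f (gd p (j+1))
          + ∑ i ∈ Finset.Ico (j+1+1) (p.length - θ + 1),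
            (probGE (θ-1) (p.drop (i+1)) - probGE θ (p.drop (i+1))) * f (gd p i) := by
      rw [Finset.sum_eq_sum_Ico_succ_bot (by omega)]
    have hcond := probGE_condition (p.drop (j+1)) 0 θ (by rw [List.length_drop]; omega)
    rw [gd_drop (by omega), Nat.add_zero, List.eraseIdx_zero, List.tail_drop] at hcond
    have hbj := gd_bounds hmem (by omega : j < p.length)
    have hbj1 := gd_bounds hmem (hj1n)
    have hmono := hsort j (j+1) (by omega) hj1n
    have hA0 : 0 ≤ probGE θ (p.drop (j+1)) :=
      probGE_nonneg _ _ (fun x hx => hmem x (List.mem_of_mem_drop hx))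
    rcases eq_or_lt_of_le hbj1.1 with hz | hpos
    · have hzj : gd p j = 0 := le_antisymm (by rw [← hz] at hmono; exact hmono) hbj.1
      rw [hzj, hf0]
      simp
    · have hratio := hR1 (gd p j) (gd p (j+1)) hbj.1 hmono hbj1.2
      have hfj1 : 0 ≤ gd p j := hbj.1
      rw [hpeel]
      have h2 : 0 ≤ gd p j * (probGE θ (p.drop (j+1+1)) * f (gd p (j+1))
          - gd p (j+1) * ∑ i ∈ Finset.Ico (j+1+1) (p.length - θ + 1),
            (probGE (θ-1) (p.drop (i+1)) - probGE θ (p.drop (i+1))) * f (gd p i)) :=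
        mul_nonneg hfj1 (by linarith [hIH])
      have key : 0 ≤ probGE θ (p.drop (j+1)) * (gd p (j+1) * f (gd p j) - gd p j * f (gd p (j+1))) :=
        mul_nonneg hA0 (by linarith)
      have hexp : gd p (j+1) * (probGE θ (p.drop (j+1)) * f (gd p j)
            - gd p j * ((probGE (θ-1) (p.drop (j+1+1)) - probGE θ (p.drop (j+1+1))) * f (gd p (j+1))
              + ∑ i ∈ Finset.Ico (j+1+1) (p.length - θ + 1),
                (probGE (θ-1) (p.drop (i+1)) - probGE θ (p.drop (i+1))) * f (gd p i)))
          = probGE θ (p.drop (j+1)) * (gd p (j+1) * f (gd p j) - gd p j * f (gd p (j+1)))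
            + gd p j * (probGE θ (p.drop (j+1+1)) * f (gd p (j+1))
              - gd p (j+1) * ∑ i ∈ Finset.Ico (j+1+1) (p.length - θ + 1),
                (probGE (θ-1) (p.drop (i+1)) - probGE θ (p.drop (i+1))) * f (gd p i)) := by
        rw [hcond]
        ring
      have hstep : 0 ≤ gd p (j+1) * (probGE θ (p.drop (j+1)) * f (gd p j)
            - gd p j * ((probGE (θ-1) (p.drop (j+1+1)) - probGE θ (p.drop (j+1+1))) * f (gd p (j+1))
              + ∑ i ∈ Finset.Ico (j+1+1) (p.length - θ + 1),
                (probGE (θ-1) (p.drop (i+1)) - probGE θ (p.drop (i+1))) * f (gd p i))) := by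
        rw [hexp]
        linarith
      have hfin := le_of_mul_le_mul_left (by linarith : gd p (j+1) * 0 ≤ gd p (j+1) *
          (probGE θ (p.drop (j+1)) * f (gd p j)
            - gd p j * ((probGE (θ-1) (p.drop (j+1+1)) - probGE θ (p.drop (j+1+1))) * f (gd p (j+1))
              + ∑ i ∈ Finset.Ico (j+1+1) (p.length - θ + 1),
                (probGE (θ-1) (p.drop (i+1)) - probGE θ (p.drop (i+1))) * f (gd p i)))) hpos
      linarith

theorem high_nonneg (f : ℝ → ℝ) (hf1 : f 1 = 0)
    (hR2 : ∀ a b : ℝ, 0 ≤ a → a ≤ b → b ≤ 1 → (1-b) * f a ≤ (1-a) * f b)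
    (p : List ℝ) (hmem : ∀ x ∈ p, 0 ≤ x ∧ x ≤ 1)
    (hsort : ∀ i k : ℕ, i ≤ k → k < p.length → gd p i ≤ gd p k)
    (θ : ℕ) (hθ1 : 1 ≤ θ) (hθn : θ ≤ p.length) :
    ∀ (d j : ℕ), (p.length - θ) + d = j → j < p.length → 0 ≤ valIdx f θ p j - ptr f θ p := by
  intro d
  induction d with
  | zero =>
    intro j hjeq hjn
    have hje : j = p.length - θ := by omega
    rw [hje, valIdx_istar f θ p hθ1 hθn]
    simp
  | succ d IH =>
    intro j hjeq hjn
    obtain ⟨m, rfl⟩ : ∃ m, j = m + 1 := ⟨j - 1, by omega⟩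
    have hmlt : p.length - θ ≤ m := by omega
    have hmn : m < p.length := by omega
    have hIH := IH m (by omega) hmn
    rw [delta_high' f p θ m hθ1 hθn (by omega) hmn] at hIH
    rw [delta_high' f p θ (m+1) hθ1 hθn (by omega) hjn]
    have hpeel : ∑ i ∈ Finset.Ico (p.length - θ) (m+1),
          (zeroGE (p.length - θ) (p.take i) - zeroGE (p.length + 1 - θ) (p.take i)) * f (gd p i)
        = (∑ i ∈ Finset.Ico (p.length - θ) m,
            (zeroGE (p.length - θ) (p.take i) - zeroGE (p.length + 1 - θ) (p.take i)) * f (gd p i))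
          + (zeroGE (p.length - θ) (p.take m) - zeroGE (p.length + 1 - θ) (p.take m)) * f (gd p m) := by
      rw [Finset.sum_Ico_succ_top hmlt]
    have hcond := zeroGE_condition (p.take (m+1)) m (p.length + 1 - θ)
      (by rw [List.length_take]; omega)
    rw [gd_take (by omega) hmn, eraseIdx_take_eq_take hmn,
      show p.length + 1 - θ - 1 = p.length - θ by omega] at hcond
    have hbm := gd_bounds hmem hmn
    have hbm1 := gd_bounds hmem hjn
    have hmono := hsort m (m+1) (by omega) hjn
    have hZ0 : 0 ≤ zeroGE (p.length + 1 - θ) (p.take (m+1)) :=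
      zeroGE_nonneg _ _ (fun x hx => hmem x (List.mem_of_mem_take hx))
    rcases eq_or_lt_of_le hbm.2 with ho | hlt1
    · -- gd p m = 1, hence gd p (m+1) = 1
      have hb1 : gd p (m+1) = 1 := le_antisymm hbm1.2 (by rw [ho] at hmono; exact hmono)
      rw [hb1, hf1]
      simp
    · have hratio := hR2 (gd p m) (gd p (m+1)) hbm.1 hmono hbm1.2
      rw [hpeel]
      have h1a : (0:ℝ) < 1 - gd p m := by linarith
      have h2 : 0 ≤ (1 - gd p (m+1)) * (zeroGE (p.length + 1 - θ) (p.take m) * f (gd p m)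
          - (1 - gd p m) * ∑ i ∈ Finset.Ico (p.length - θ) m,
            (zeroGE (p.length - θ) (p.take i) - zeroGE (p.length + 1 - θ) (p.take i)) * f (gd p i)) :=
        mul_nonneg (by linarith [hbm1.2]) (by linarith [hIH])
      have key : 0 ≤ zeroGE (p.length + 1 - θ) (p.take (m+1))
          * ((1 - gd p m) * f (gd p (m+1)) - (1 - gd p (m+1)) * f (gd p m)) :=
        mul_nonneg hZ0 (by linarith)
      have hexp : (1 - gd p m) * (zeroGE (p.length + 1 - θ) (p.take (m+1)) * f (gd p (m+1))
            - (1 - gd p (m+1)) * ((∑ i ∈ Finset.Ico (p.length - θ) m,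
                (zeroGE (p.length - θ) (p.take i) - zeroGE (p.length + 1 - θ) (p.take i)) * f (gd p i))
              + (zeroGE (p.length - θ) (p.take m) - zeroGE (p.length + 1 - θ) (p.take m)) * f (gd p m)))
          = zeroGE (p.length + 1 - θ) (p.take (m+1))
              * ((1 - gd p m) * f (gd p (m+1)) - (1 - gd p (m+1)) * f (gd p m))
            + (1 - gd p (m+1)) * (zeroGE (p.length + 1 - θ) (p.take m) * f (gd p m)
              - (1 - gd p m) * ∑ i ∈ Finset.Ico (p.length - θ) m,
                (zeroGE (p.length - θ) (p.take i) - zeroGE (p.length + 1 - θ) (p.take i)) * f (gd p i)) := by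
      -- use the conditioning identity
        rw [hcond]
        ring
      have hstep : 0 ≤ (1 - gd p m) * (zeroGE (p.length + 1 - θ) (p.take (m+1)) * f (gd p (m+1))
            - (1 - gd p (m+1)) * ((∑ i ∈ Finset.Ico (p.length - θ) m,
                (zeroGE (p.length - θ) (p.take i) - zeroGE (p.length + 1 - θ) (p.take i)) * f (gd p i))
              + (zeroGE (p.length - θ) (p.take m) - zeroGE (p.length + 1 - θ) (p.take m)) * f (gd p m))) := by
        rw [hexp]
        linarith
      have hfin := le_of_mul_le_mul_left (by linarith : (1 - gd p m) * 0 ≤ (1 - gd p m) *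
          (zeroGE (p.length + 1 - θ) (p.take (m+1)) * f (gd p (m+1))
            - (1 - gd p (m+1)) * ((∑ i ∈ Finset.Ico (p.length - θ) m,
                (zeroGE (p.length - θ) (p.take i) - zeroGE (p.length + 1 - θ) (p.take i)) * f (gd p i))
              + (zeroGE (p.length - θ) (p.take m) - zeroGE (p.length + 1 - θ) (p.take m)) * f (gd p m)))) h1a
      linarith

theorem ptr_le_valIdx (f : ℝ → ℝ) (hf0 : f 0 = 0) (hf1 : f 1 = 0)
    (hR1 : ∀ a b : ℝ, 0 ≤ a → a ≤ b → b ≤ 1 → a * f b ≤ b * f a)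
    (hR2 : ∀ a b : ℝ, 0 ≤ a → a ≤ b → b ≤ 1 → (1-b) * f a ≤ (1-a) * f b)
    (p : List ℝ) (hmem : ∀ x ∈ p, 0 ≤ x ∧ x ≤ 1)
    (hsort : ∀ i k : ℕ, i ≤ k → k < p.length → gd p i ≤ gd p k)
    (θ : ℕ) (hθ1 : 1 ≤ θ) (hθn : θ ≤ p.length) (j : ℕ) (hj : j < p.length) :
    ptr f θ p ≤ valIdx f θ p j := by
  rcases le_or_gt j (p.length - θ) with h | h
  · have := low_nonneg f hf0 hR1 p hmem hsort θ hθ1 hθn (p.length - θ - j) j (by omega)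
    linarith
  · have := high_nonneg f hf1 hR2 p hmem hsort θ hθ1 hθn (j - (p.length - θ)) j (by omega) hj
    linarith

lemma hmem_erase {p : List ℝ} (hmem : ∀ x ∈ p, 0 ≤ x ∧ x ≤ 1) (j : ℕ) :
    ∀ x ∈ p.eraseIdx j, 0 ≤ x ∧ x ≤ 1 :=
  fun x hx => hmem x (List.mem_of_mem_eraseIdx hx)

lemma hsort_erase {p : List ℝ} (hsort : ∀ i k : ℕ, i ≤ k → k < p.length → gd p i ≤ gd p k)
    {j : ℕ} (hj : j < p.length) :
    ∀ i k : ℕ, i ≤ k → k < (p.eraseIdx j).length → gd (p.eraseIdx j) i ≤ gd (p.eraseIdx j) k := by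
  intro i k hik hk
  rw [len_erase hj] at hk
  rcases Nat.lt_or_ge i j with hi | hi
  · rw [gd_eraseIdx_of_lt hi hj]
    rcases Nat.lt_or_ge k j with hk2 | hk2
    · rw [gd_eraseIdx_of_lt hk2 hj]
      exact hsort i k hik (by omega)
    · rw [gd_eraseIdx_of_ge hk2 (by omega)]
      exact hsort i (k+1) (by omega) (by omega)
  · rw [gd_eraseIdx_of_ge hi (by omega), gd_eraseIdx_of_ge (by omega) (by omega)]
    exact hsort (i+1) (k+1) (by omega) (by omega)

theorem cost_eq_ptr (f : ℝ → ℝ) (hf0 : f 0 = 0) (hf1 : f 1 = 0)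
    (hR1 : ∀ a b : ℝ, 0 ≤ a → a ≤ b → b ≤ 1 → a * f b ≤ b * f a)
    (hR2 : ∀ a b : ℝ, 0 ≤ a → a ≤ b → b ≤ 1 → (1-b) * f a ≤ (1-a) * f b) :
    ∀ (n : ℕ) (p : List ℝ), p.length = n →
    (∀ x ∈ p, 0 ≤ x ∧ x ≤ 1) → (∀ i k : ℕ, i ≤ k → k < p.length → gd p i ≤ gd p k) →
    ∀ θ, cost f θ p = ptr f θ p := by
  intro n
  induction n using Nat.strong_induction_on with
  | _ n IH =>
    intro p hn hmem hsort θ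
    match θ with
    | 0 => rw [cost, ptr_zero]
    | θ+1 =>
      by_cases h : p.length < θ+1
      · rw [cost, if_pos h, ptr_of_lt f θ p h]
      · rw [cost, if_neg h]
        have hbody : ∀ i : Fin p.length,
            (f (p.get i) + p.get i * cost f θ (p.eraseIdx i.1)
              + (1 - p.get i) * cost f (θ+1) (p.eraseIdx i.1))
            = valIdx f (θ+1) p i.1 := by
          intro i
          have hi := i.isLt
          have hlen : (p.eraseIdx i.1).length = n - 1 := by rw [len_erase hi, hn]
          rw [IH (n-1) (by omega) _ hlen (hmem_erase hmem i.1) (hsort_erase hsort hi) θ,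
            IH (n-1) (by omega) _ hlen (hmem_erase hmem i.1) (hsort_erase hsort hi) (θ+1)]
          rw [valIdx, Nat.add_sub_cancel]
          have : p.get i = gd p i.1 := by rw [List.get_eq_getElem, gd_eq hi]
          rw [this]
        rw [iInf_congr hbody]
        have hne : Nonempty (Fin p.length) := ⟨⟨0, by omega⟩⟩
        have hbdd : BddBelow (Set.range fun i : Fin p.length => valIdx f (θ+1) p i.1) := by
          refine ⟨ptr f (θ+1) p, ?_⟩
          rintro x ⟨i, rfl⟩
          exact ptr_le_valIdx f hf0 hf1 hR1 hR2 p hmem hsort (θ+1) (by omega) (by omega) i.1 i.isLt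
        apply le_antisymm
        · have hle := ciInf_le hbdd (⟨p.length - (θ+1), by omega⟩ : Fin p.length)
          calc ⨅ i : Fin p.length, valIdx f (θ+1) p i.1
              ≤ valIdx f (θ+1) p (p.length - (θ+1)) := hle
            _ = ptr f (θ+1) p := valIdx_istar f (θ+1) p (by omega) (by omega)
        · exact le_ciInf fun i =>
            ptr_le_valIdx f hf0 hf1 hR1 hR2 p hmem hsort (θ+1) (by omega) (by omega) i.1 i.isLt


/-- Theorem (optimal coherent strategy for block computation of Boolean threshold
functions): with cost given by binary entropy `H` and sorted probabilities
`p_1 ≤ … ≤ p_n`, the 1-based index `n - θ + 1` (0-based index `n - θ`) attains the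
minimum in the DP recursion for `C_H(θ; p_1,…,p_n)`; i.e. among coherent strategies
for block computation of `Π_{n-k}` it is optimal for node `k+1` to transmit its
entire block first. -/
theorem stmt_6 (n : ℕ) (hn : 1 ≤ n) (p : Fin n → ℝ)
    (hp0 : ∀ i, 0 ≤ p i) (hp1 : ∀ i, p i ≤ 1) (hsorted : Monotone p)
    (θ : ℕ) (hθ1 : 1 ≤ θ) (hθn : θ ≤ n) (j : Fin n) :
    binH (p ⟨n - θ, by omega⟩)
      + p ⟨n - θ, by omega⟩ * cost binH (θ - 1) ((List.ofFn p).eraseIdx (n - θ))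
      + (1 - p ⟨n - θ, by omega⟩) * cost binH θ ((List.ofFn p).eraseIdx (n - θ))
    ≤ binH (p j) + p j * cost binH (θ - 1) ((List.ofFn p).eraseIdx j)
      + (1 - p j) * cost binH θ ((List.ofFn p).eraseIdx j) := by
  set P := List.ofFn p with hP
  have hlen : P.length = n := by rw [hP, List.length_ofFn]
  have hmem : ∀ x ∈ P, 0 ≤ x ∧ x ≤ 1 := by
    intro x hx
    rw [hP, List.mem_ofFn] at hx
    obtain ⟨i, rfl⟩ := hx
    exact ⟨hp0 i, hp1 i⟩
  have hgd : ∀ (i : ℕ) (hi : i < n), gd P i = p ⟨i, hi⟩ := by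
    intro i hi
    rw [gd_eq (by omega : i < P.length)]
    exact List.getElem_ofFn (f := p) (i := i) (by rw [List.length_ofFn]; omega)
  have hsort : ∀ i k : ℕ, i ≤ k → k < P.length → gd P i ≤ gd P k := by
    intro i k hik hk
    rw [hlen] at hk
    rw [hgd i (by omega), hgd k hk]
    exact hsorted (by simpa [Fin.mk_le_mk] using hik)
  have hin : (n - θ) < n := by omega
  have hjn : (j : ℕ) < n := j.isLt
  have e1 : ∀ (k : ℕ), k < n → ∀ (τ : ℕ),
      cost binH τ (P.eraseIdx k) = ptr binH τ (P.eraseIdx k) := by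
    intro k hk τ
    exact cost_eq_ptr binH binH_zero binH_one
      (fun a b ha hab hb => binH_ratio1 ha hab hb)
      (fun a b ha hab hb => binH_ratio2 ha hab hb)
      (n-1) _ (by rw [len_erase (by omega)]; omega)
      (hmem_erase hmem k) (hsort_erase hsort (by omega)) τ
  rw [e1 (n-θ) hin (θ-1), e1 (n-θ) hin θ, e1 j.1 hjn (θ-1), e1 j.1 hjn θ]
  have hfinal : valIdx binH θ P (n - θ) ≤ valIdx binH θ P j.1 := by
    have eq1 : valIdx binH θ P (n - θ) = ptr binH θ P := by
      have := valIdx_istar binH θ P hθ1 (by omega)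
      rwa [hlen] at this
    rw [eq1]
    exact ptr_le_valIdx binH binH_zero binH_one
      (fun a b ha hab hb => binH_ratio1 ha hab hb)
      (fun a b ha hab hb => binH_ratio2 ha hab hb)
      P hmem hsort θ hθ1 (by omega) j.1 (by omega)
  rw [valIdx, valIdx, hgd (n-θ) hin, hgd j.1 hjn] at hfinal
  exact hfinal
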